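/- Let G be a locally compact abelian group, let ω ≥ 1 and σ be weights on G, let X be a symmetric Banach L^1_σ(G)-module, and let I_0 = {f ∈ L^1_ω(G) : ∫_G f(t)dt = 0} be the augmentation ideal of L^1_ω(G). Let ι⊗id_X : I_0 ⊗̂ X → L^1_ω(G) ⊗̂ X be the norm-decreasing operator induced by the inclusion ι: I_0 → L^1_ω(G). Then ι⊗id_X is a bicontinuous algebraic isomorphism from I_0 ⊗̂ X onto ker φ^X_ω, where φ^X_ω : L^1_ω(G) ⊗̂ X → X is the operator determined by φ^X_ω(f⊗x) = (∫_G f(t)dt)·x. -/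

import Mathlib

open MeasureTheory ENNReal

noncomputable section

universe u

/-- The weighted measure associated to a measure `μ` and a weight `ω`. -/
def weightedMeasure {G : Type*} [MeasurableSpace G] (μ : Measure G) (ω : G → ℝ) : Measure G :=
  μ.withDensity fun t => ENNReal.ofReal (ω t)

set_option maxHeartbeats 1000000 in
/-- Let `G` be a locally compact abelian group, `ω ≥ 1` and `σ` weights on
`G`, `X` a symmetric Banach `L¹_σ(G)`-module, and `I₀ = ker (f ↦ ∫ f dλ)` the augmentation
ideal of `L¹_ω(G)`.  Then the norm-decreasing operator
`ι ⊗ id_X : I₀ ⊗̂ X → L¹_ω(G) ⊗̂ X` induced by the inclusion is a bicontinuous algebraic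
isomorphism from `I₀ ⊗̂ X` onto `ker φ^X_ω`, where `φ^X_ω (f ⊗ x) = (∫ f dλ) • x`. -/
theorem stmt_7
    {G : Type*} [CommGroup G] [TopologicalSpace G] [IsTopologicalGroup G]
    [LocallyCompactSpace G] [T2Space G] [MeasurableSpace G] [BorelSpace G]
    (μ : Measure G) [μ.IsHaarMeasure]
    (ω : G → ℝ) (hω_cont : Continuous ω) (hω_pos : ∀ t, 0 < ω t)
    (hω_sub : ∀ s t, ω (s * t) ≤ ω s * ω t) (hω_one : ω 1 = 1) (hω_ge : ∀ t, 1 ≤ ω t)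
    (σ : G → ℝ) (hσ_cont : Continuous σ) (hσ_pos : ∀ t, 0 < σ t)
    (hσ_sub : ∀ s t, σ (s * t) ≤ σ s * σ t) (hσ_one : σ 1 = 1)
    -- the convolution algebra `L¹_σ(G)`
    (convσ : Lp ℂ 1 (weightedMeasure μ σ) →L[ℂ] Lp ℂ 1 (weightedMeasure μ σ) →L[ℂ]
        Lp ℂ 1 (weightedMeasure μ σ))
    (hconvσ : ∀ f g, (convσ f g : G → ℂ) =ᵐ[μ] fun s => ∫ t, f t * g (t⁻¹ * s) ∂μ)
    -- `X` is a symmetric Banach `L¹_σ(G)`-module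
    {X : Type*} [NormedAddCommGroup X] [NormedSpace ℂ X] [CompleteSpace X]
    (act : Lp ℂ 1 (weightedMeasure μ σ) →L[ℂ] X →L[ℂ] X)
    (hact_assoc : ∀ f g x, act (convσ f g) x = act f (act g x))
    (hact_norm : ∀ f x, ‖act f x‖ ≤ ‖f‖ * ‖x‖)
    -- the augmentation character of `L¹_ω(G)`, whose kernel is the augmentation ideal `I₀`
    (aug : Lp ℂ 1 (weightedMeasure μ ω) →L[ℂ] ℂ)
    (haug : ∀ f, aug f = ∫ t, f t ∂μ)
    -- `T` is the projective tensor product `L¹_ω(G) ⊗̂ X`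
    {T : Type u} [NormedAddCommGroup T] [NormedSpace ℂ T] [CompleteSpace T]
    (tmul : Lp ℂ 1 (weightedMeasure μ ω) →L[ℂ] X →L[ℂ] T)
    (hT_norm : ∀ f x, ‖tmul f x‖ = ‖f‖ * ‖x‖)
    (hT_dense : Dense (Submodule.span ℂ
      (Set.range fun p : Lp ℂ 1 (weightedMeasure μ ω) × X => tmul p.1 p.2) : Set T))
    (hT_univ : ∀ (Y : Type u) (_ : NormedAddCommGroup Y), ∀ (_ : NormedSpace ℂ Y),
      ∀ b : Lp ℂ 1 (weightedMeasure μ ω) →L[ℂ] X →L[ℂ] Y,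
        ∃ B : T →L[ℂ] Y, ‖B‖ ≤ ‖b‖ ∧ ∀ f x, B (tmul f x) = b f x)
    -- `T'` is the projective tensor product `I₀ ⊗̂ X`
    {T' : Type u} [NormedAddCommGroup T'] [NormedSpace ℂ T'] [CompleteSpace T']
    (tmul' : ↥(LinearMap.ker (aug : Lp ℂ 1 (weightedMeasure μ ω) →ₗ[ℂ] ℂ)) →L[ℂ] X →L[ℂ] T')
    (hT'_norm : ∀ f x, ‖tmul' f x‖ = ‖f‖ * ‖x‖)
    (hT'_dense : Dense (Submodule.span ℂ
      (Set.range fun p : ↥(LinearMap.ker (aug : Lp ℂ 1 (weightedMeasure μ ω) →ₗ[ℂ] ℂ)) × X => tmul' p.1 p.2) : Set T'))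
    (hT'_univ : ∀ (Y : Type u) (_ : NormedAddCommGroup Y), ∀ (_ : NormedSpace ℂ Y),
      ∀ b : ↥(LinearMap.ker (aug : Lp ℂ 1 (weightedMeasure μ ω) →ₗ[ℂ] ℂ)) →L[ℂ] X →L[ℂ] Y,
        ∃ B : T' →L[ℂ] Y, ‖B‖ ≤ ‖b‖ ∧ ∀ f x, B (tmul' f x) = b f x)
    -- the operator `ι ⊗ id_X : I₀ ⊗̂ X → L¹_ω(G) ⊗̂ X` induced by the inclusion
    (j : T' →L[ℂ] T)
    (hj : ∀ (f : ↥(LinearMap.ker (aug : Lp ℂ 1 (weightedMeasure μ ω) →ₗ[ℂ] ℂ))) (x : X), j (tmul' f x) = tmul (↑f) x)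
    (hj_norm : ∀ u, ‖j u‖ ≤ ‖u‖)
    -- the operator `φ^X_ω : L¹_ω(G) ⊗̂ X → X`
    (φT : T →L[ℂ] X)
    (hφT : ∀ f x, φT (tmul f x) = (∫ t, f t ∂μ) • x) :
    -- conclusion: `ι ⊗ id_X` is a bicontinuous algebraic isomorphism onto `ker φ^X_ω`
    Function.Injective j ∧
    Set.range j = {u : T | φT u = 0} ∧
    (∃ c : ℝ, 0 < c ∧ ∀ u : T', ‖u‖ ≤ c * ‖j u‖) := by

  classical
  have hwd : weightedMeasure μ ω = μ.withDensity (fun t => ENNReal.ofReal (ω t)) := rfl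
  -- `μ` is absolutely continuous w.r.t. the weighted measure `ν`
  have hmeas : Measurable fun t => ENNReal.ofReal (ω t) :=
    ENNReal.measurable_ofReal.comp hω_cont.measurable
  have hac : μ ≪ weightedMeasure μ ω :=
    hwd ▸ withDensity_absolutelyContinuous' hmeas.aemeasurable
      (Filter.Eventually.of_forall fun t => by
        exact (ENNReal.ofReal_pos.mpr (hω_pos t)).ne')
  -- a compact neighborhood of `1`
  obtain ⟨K, hKc, hK1⟩ := exists_compact_mem_nhds (1 : G)
  have hKm : MeasurableSet K := hKc.isClosed.measurableSet
  have hKpos : 0 < μ K :=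
    lt_of_lt_of_le
      (isOpen_interior.measure_pos μ ⟨1, mem_interior_iff_mem_nhds.mpr hK1⟩)
      (measure_mono interior_subset)
  have hKfin : μ K < ⊤ := hKc.measure_lt_top
  obtain ⟨z, hz, hzb⟩ :=
    hKc.exists_isMaxOn ⟨1, mem_of_mem_nhds hK1⟩ hω_cont.continuousOn
  have hνK : (weightedMeasure μ ω) K < ⊤ := by
    have hle : (weightedMeasure μ ω) K ≤ ENNReal.ofReal (ω z) * μ K := by
      rw [hwd, withDensity_apply _ hKm]
      calc ∫⁻ t in K, ENNReal.ofReal (ω t) ∂μ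
          ≤ ∫⁻ _ in K, ENNReal.ofReal (ω z) ∂μ :=
            setLIntegral_mono measurable_const
              (fun t ht => ENNReal.ofReal_le_ofReal (hzb ht))
        _ = ENNReal.ofReal (ω z) * μ K := setLIntegral_const _ _
    exact lt_of_le_of_lt hle (ENNReal.mul_lt_top ENNReal.ofReal_lt_top hKfin)
  -- the indicator of `K` as an element of `L¹_ω`
  have hInt : Integrable (K.indicator fun _ => (1 : ℂ)) (weightedMeasure μ ω) := by
    rw [integrable_indicator_iff hKm]
    exact (integrableOn_const_iff (by simp)).mpr (Or.inr hνK)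
  have hmem : MemLp (K.indicator fun _ => (1 : ℂ)) 1 (weightedMeasure μ ω) :=
    (memLp_one_iff_integrable).mpr hInt
  set f₀ : Lp ℂ 1 (weightedMeasure μ ω) := hmem.toLp _ with hf₀def
  have hf₀ae : (f₀ : G → ℂ) =ᵐ[μ] K.indicator fun _ => (1 : ℂ) :=
    hac.ae_eq (hmem.coeFn_toLp)
  have hIntμ : Integrable (K.indicator fun _ => (1 : ℂ)) μ := by
    rw [integrable_indicator_iff hKm]
    exact (integrableOn_const_iff (by simp)).mpr (Or.inr hKfin)
  have haug₀ : aug f₀ = ((μ K).toReal : ℂ) := by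
    rw [haug, integral_congr_ae hf₀ae, integral_indicator_const _ hKm]
    simp [Measure.real]
  have hc : aug f₀ ≠ 0 := by
    rw [haug₀]
    exact_mod_cast (ENNReal.toReal_pos hKpos.ne' hKfin.ne).ne'
  -- normalize to get `f₁` with `aug f₁ = 1`
  set f₁ : Lp ℂ 1 (weightedMeasure μ ω) := (aug f₀)⁻¹ • f₀ with hf₁def
  have haug₁ : aug f₁ = 1 := by
    rw [hf₁def, _root_.map_smul, smul_eq_mul, inv_mul_cancel₀ hc]
  -- the retraction `r : L¹_ω → ker aug`, `r f = f - (aug f) • f₁`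
  set rlin : Lp ℂ 1 (weightedMeasure μ ω) →L[ℂ] Lp ℂ 1 (weightedMeasure μ ω) :=
    ContinuousLinearMap.id ℂ _ - aug.smulRight f₁ with hrlin
  have hrmem : ∀ f, rlin f ∈ LinearMap.ker (aug : Lp ℂ 1 (weightedMeasure μ ω) →ₗ[ℂ] ℂ) := by
    intro f
    simp [hrlin, LinearMap.mem_ker, _root_.map_smul, smul_eq_mul, haug₁]
  set r : Lp ℂ 1 (weightedMeasure μ ω) →L[ℂ] ↥(LinearMap.ker (aug : Lp ℂ 1 (weightedMeasure μ ω) →ₗ[ℂ] ℂ)) :=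
    rlin.codRestrict (LinearMap.ker (aug : Lp ℂ 1 (weightedMeasure μ ω) →ₗ[ℂ] ℂ)) hrmem with hr
  have hrval : ∀ f, (↑(r f) : Lp ℂ 1 (weightedMeasure μ ω)) = f - aug f • f₁ := fun f => rfl
  have hrker : ∀ g : ↥(LinearMap.ker (aug : Lp ℂ 1 (weightedMeasure μ ω) →ₗ[ℂ] ℂ)), r ↑g = g := by
    intro g
    apply Subtype.ext
    rw [hrval]
    have : aug ↑g = 0 := g.2
    rw [this, zero_smul, sub_zero]
  -- the induced map `P : T → T'`
  obtain ⟨P, hPnorm, hP⟩ := hT_univ T' inferInstance inferInstance (tmul'.comp r)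
  have hP' : ∀ f x, P (tmul f x) = tmul' (r f) x := fun f x => hP f x
  -- `P ∘ j = id`
  have hPj : ∀ u : T', P (j u) = u := by
    have : P.comp j = ContinuousLinearMap.id ℂ T' := by
      apply ContinuousLinearMap.ext_on hT'_dense
      rintro _ ⟨⟨g, x⟩, rfl⟩
      simp only [ContinuousLinearMap.comp_apply, ContinuousLinearMap.id_apply]
      rw [hj, hP', hrker]
    intro u
    exact DFunLike.congr_fun this u
  -- `φT ∘ j = 0`
  have hφj : ∀ u : T', φT (j u) = 0 := by
    have : φT.comp j = 0 := by
      apply ContinuousLinearMap.ext_on hT'_dense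
      rintro _ ⟨⟨g, x⟩, rfl⟩
      simp only [ContinuousLinearMap.comp_apply, ContinuousLinearMap.zero_apply]
      rw [hj, hφT]
      have : (∫ t, (g : Lp ℂ 1 (weightedMeasure μ ω)) t ∂μ) = 0 := by
        have := g.2
        rwa [LinearMap.mem_ker, ContinuousLinearMap.coe_coe, haug] at this
      rw [this, zero_smul]
    intro u
    exact DFunLike.congr_fun this u
  -- `j ∘ P + (tmul f₁) ∘ φT = id`
  have hjP : ∀ u : T, j (P u) + tmul f₁ (φT u) = u := by
    have : j.comp P + (tmul f₁).comp φT = ContinuousLinearMap.id ℂ T := by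
      apply ContinuousLinearMap.ext_on hT_dense
      rintro _ ⟨⟨f, x⟩, rfl⟩
      simp only [ContinuousLinearMap.add_apply, ContinuousLinearMap.comp_apply,
        ContinuousLinearMap.id_apply]
      rw [hP', hj, hrval, hφT, _root_.map_smul, map_sub, _root_.map_smul]
      have haugf : (∫ t, f t ∂μ) = aug f := (haug f).symm
      rw [haugf]
      simp only [ContinuousLinearMap.sub_apply, ContinuousLinearMap.smul_apply]
      abel
    intro u
    exact DFunLike.congr_fun this u
  refine ⟨?_, ?_, ?_⟩
  · intro u v huv
    rw [← hPj u, ← hPj v, huv]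
  · ext u
    constructor
    · rintro ⟨v, rfl⟩
      exact hφj v
    · intro hu
      refine ⟨P u, ?_⟩
      have := hjP u
      rw [Set.mem_setOf_eq] at hu
      rwa [hu, map_zero, add_zero] at this
  · refine ⟨‖P‖ + 1, by positivity, fun u => ?_⟩
    calc ‖u‖ = ‖P (j u)‖ := by rw [hPj]
      _ ≤ ‖P‖ * ‖j u‖ := P.le_opNorm _
      _ ≤ (‖P‖ + 1) * ‖j u‖ := by
          apply mul_le_mul_of_nonneg_right (by linarith [norm_nonneg P]) (norm_nonneg _)
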